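/- For every nonnegative integer t, the rational number (6 + 2t)/(9 + 6t) has odd greedy expansion of length 2 with first denominator 3; conversely, every rational number whose odd greedy expansion has length 2 and begins with denominator 3 is of this form. -/

import Mathlib

/-- `a` is the denominator chosen by the odd greedy algorithm for remainder `q`. -/
def IsOddGreedyStep (q : ℚ) (a : ℕ) : Prop :=
  Odd a ∧ ((a = 1 ∧ 1 ≤ q) ∨ (3 ≤ a ∧ (1 : ℚ) / a ≤ q ∧ q < 1 / ((a : ℚ) - 2)))

/-- `x 0, …, x (m-1)` are the denominators of the odd greedy expansion of `q`. -/
def IsOddGreedyExpansion (m : ℕ) (x : ℕ → ℕ) (q : ℚ) : Prop :=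
  q = ∑ i ∈ Finset.range m, (1 : ℚ) / (x i) ∧
    ∀ i < m, IsOddGreedyStep (q - ∑ j ∈ Finset.range i, (1 : ℚ) / (x j)) (x i)

/-- a rational `q` has odd greedy expansion of length `2` with first
denominator `3` iff `q = (6 + 2t)/(9 + 6t)` for some nonnegative integer `t`. -/
theorem stmt_10 (q : ℚ) :
    (∃ x₂ : ℕ, IsOddGreedyExpansion 2 (fun i => if i = 0 then 3 else x₂) q) ↔
      ∃ t : ℕ, q = (6 + 2 * (t : ℚ)) / (9 + 6 * t) := by
  constructor
  · rintro ⟨x₂, hsum, hstep⟩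
    have h0 := hstep 0 (by norm_num)
    have h1 := hstep 1 (by norm_num)
    simp only [Finset.sum_range_succ, Finset.sum_range_zero, zero_add, reduceIte,
      Nat.cast_ofNat, sub_zero, IsOddGreedyStep] at hsum h0 h1
    have hq1 : q < 1 := by
      rcases h0.2 with ⟨h, -⟩ | ⟨-, -, h⟩
      · omega
      · norm_num at h; exact h
    obtain ⟨hodd, hcase⟩ := h1
    rcases hcase with ⟨hx1, hge⟩ | ⟨hx3, -, -⟩
    · subst hx1
      norm_num at hsum
      rw [hsum] at hq1
      norm_num at hq1
    · obtain ⟨k, hk⟩ := hodd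
      have hk1 : 1 ≤ k := by omega
      refine ⟨k - 1, ?_⟩
      have hkc : ((k - 1 : ℕ) : ℚ) = (k : ℚ) - 1 := by
        push_cast [Nat.cast_sub hk1]; ring
      rw [hsum, hk, hkc]
      have hkq : (1:ℚ) ≤ (k:ℚ) := by exact_mod_cast hk1
      have e1 : (2 * (k:ℚ) + 1) ≠ 0 := by nlinarith
      have e2 : (9 + 6 * ((k:ℚ) - 1)) ≠ 0 := by nlinarith
      push_cast
      field_simp
      ring
  · rintro ⟨t, rfl⟩
    have h9 : (0:ℚ) < 9 + 6 * t := by positivity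
    have h3 : (0:ℚ) < 2 * t + 3 := by positivity
    have ht0 : (0:ℚ) ≤ (t:ℚ) := t.cast_nonneg
    have key : (6 + 2 * (t:ℚ)) / (9 + 6 * t) - 1 / 3 = 1 / (2 * t + 3) := by
      field_simp; ring
    refine ⟨2 * t + 3, ?_, ?_⟩
    · simp only [Finset.sum_range_succ, Finset.sum_range_zero, zero_add, reduceIte,
        Nat.cast_ofNat]
      push_cast
      field_simp
      ring
    · intro i hi
      interval_cases i <;>
        simp only [Finset.sum_range_succ, Finset.sum_range_zero, zero_add, reduceIte,
          if_neg (by norm_num : ¬ (1:ℕ) = 0), Nat.cast_ofNat, sub_zero, IsOddGreedyStep]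
      · refine ⟨⟨1, by ring⟩, Or.inr ⟨le_refl 3, ?_, ?_⟩⟩
        · rw [div_le_div_iff₀ (by norm_num) h9]; nlinarith
        · norm_num
          rw [div_lt_one h9]; nlinarith
      · refine ⟨⟨t + 1, by ring⟩, Or.inr ⟨by omega, ?_, ?_⟩⟩
        · rw [key]; push_cast; exact le_refl _
        · rw [key]
          push_cast
          rw [div_lt_div_iff₀ h3 (by nlinarith)]
          nlinarith
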